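/- For every n ∈ ℤ, the function Vₙ is twice differentiable on gₙ, its second derivative is Vₙ''(x) = (2/π)∫_{g∖gₙ} v(t) / (|t − x|³ vₙ(t)) dt, and 0 ≤ Vₙ''(x) ≤ 2 Vₙ(x)/ρₙ² for all x ∈ gₙ. -/

import Mathlib

open MeasureTheory Filter


lemma aux1 (t x : ℝ) (h : t ≠ x) :
    HasDerivAt (fun y => |t - y|⁻¹) ((t - x) / |t - x| ^ 3) x := by
  rcases h.lt_or_gt with hlt | hlt
  · have hne : x - t ≠ 0 := sub_ne_zero.2 (ne_of_gt hlt)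
    have h1 : HasDerivAt (fun y : ℝ => (y - t)⁻¹) (-1 / (x - t) ^ 2) x := by
      have h0 : HasDerivAt (fun y : ℝ => (y - t)⁻¹) _ x := ((hasDerivAt_id x).sub_const t).inv hne
      simpa using h0
    have h2 : (fun y : ℝ => |t - y|⁻¹) =ᶠ[nhds x] fun y => (y - t)⁻¹ := by
      filter_upwards [Ioi_mem_nhds hlt] with y hy
      rw [abs_sub_comm, abs_of_pos (sub_pos.2 hy)]
    refine (h1.congr_of_eventuallyEq h2).congr_deriv ?_
    rw [abs_sub_comm, abs_of_pos (sub_pos.2 hlt)]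
    field_simp
    ring
  · have hne : t - x ≠ 0 := sub_ne_zero.2 (ne_of_gt hlt)
    have h1 : HasDerivAt (fun y : ℝ => (t - y)⁻¹) (1 / (t - x) ^ 2) x := by
      have h0 : HasDerivAt (fun y : ℝ => (t - y)⁻¹) _ x := ((hasDerivAt_id x).const_sub t).inv hne
      simpa using h0
    have h2 : (fun y : ℝ => |t - y|⁻¹) =ᶠ[nhds x] fun y => (t - y)⁻¹ := by
      filter_upwards [Iio_mem_nhds hlt] with y hy
      rw [abs_of_pos (sub_pos.2 hy)]
    refine (h1.congr_of_eventuallyEq h2).congr_deriv ?_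
    rw [abs_of_pos (sub_pos.2 hlt)]
    field_simp

lemma aux2 (t x : ℝ) (h : t ≠ x) :
    HasDerivAt (fun y => (t - y) / |t - y| ^ 3) (2 / |t - x| ^ 3) x := by
  rcases h.lt_or_gt with hlt | hlt
  · have hne : x - t ≠ 0 := sub_ne_zero.2 (ne_of_gt hlt)
    have h1 : HasDerivAt (fun y : ℝ => -((y - t) ^ 2)⁻¹) (2 / (x - t) ^ 3) x := by
      have h2 : HasDerivAt (fun y : ℝ => -((y - t) ^ 2)⁻¹) _ x := ((((hasDerivAt_id x).sub_const t).pow 2).inv (pow_ne_zero 2 hne)).neg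
      convert h2 using 1
      simp only [id, Pi.pow_apply]
      field_simp
      ring
    have h2 : (fun y : ℝ => (t - y) / |t - y| ^ 3) =ᶠ[nhds x] fun y => -((y - t) ^ 2)⁻¹ := by
      filter_upwards [Ioi_mem_nhds hlt] with y hy
      have hy' : (0:ℝ) < y - t := sub_pos.2 hy
      rw [abs_sub_comm, abs_of_pos hy']
      field_simp
      ring
    refine (h1.congr_of_eventuallyEq h2).congr_deriv ?_
    rw [abs_sub_comm, abs_of_pos (sub_pos.2 hlt)]
  · have hne : t - x ≠ 0 := sub_ne_zero.2 (ne_of_gt hlt)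
    have h1 : HasDerivAt (fun y : ℝ => ((t - y) ^ 2)⁻¹) (2 / (t - x) ^ 3) x := by
      have h2 : HasDerivAt (fun y : ℝ => ((t - y) ^ 2)⁻¹) _ x := (((hasDerivAt_id x).const_sub t).pow 2).inv (pow_ne_zero 2 hne)
      convert h2 using 1
      simp only [id, Pi.pow_apply]
      field_simp
      ring
    have h2 : (fun y : ℝ => (t - y) / |t - y| ^ 3) =ᶠ[nhds x] fun y => ((t - y) ^ 2)⁻¹ := by
      filter_upwards [Iio_mem_nhds hlt] with y hy
      have hy' : (0:ℝ) < t - y := sub_pos.2 hy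
      rw [abs_of_pos hy']
      field_simp
    refine (h1.congr_of_eventuallyEq h2).congr_deriv ?_
    rw [abs_of_pos (sub_pos.2 hlt)]


theorem stmt_17
    (zm zp : ℤ → ℝ)
    (hz : ∀ n, zm n < zp n)
    (hsep : ∀ n, zp n < zm (n + 1))
    (v : ℝ → ℝ)
    (hvmeas : Measurable v)
    (hvint : MeasureTheory.Integrable v)
    (hvnn : ∀ t, 0 ≤ v t)
    (hvsupp : ∀ t ∉ ⋃ n : ℤ, Set.Ioo (zm n) (zp n), v t = 0)
    (vn : ℤ → ℝ → ℝ)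
    (hvn : ∀ n x, vn n x = Real.sqrt (|x - zm n| * |x - zp n|))
    (ρ : ℤ → ℝ)
    (hρ : ∀ n, ρ n = sInf (Set.image2 dist (Set.Ioo (zm n) (zp n))
      ((⋃ m : ℤ, Set.Ioo (zm m) (zp m)) \ Set.Ioo (zm n) (zp n))))
    (hρpos : ∀ n, 0 < ρ n)
    (Vn : ℤ → ℝ → ℝ)
    (hVn : ∀ n x, Vn n x = (1 / Real.pi) *
      ∫ t in ((⋃ m : ℤ, Set.Ioo (zm m) (zp m)) \ Set.Ioo (zm n) (zp n)),
        v t / (|t - x| * vn n t))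
    :
    ∀ n : ℤ, ∀ x ∈ Set.Ioo (zm n) (zp n),
      DifferentiableAt ℝ (Vn n) x ∧
      HasDerivAt (deriv (Vn n)) ((2 / Real.pi) *
        ∫ t in ((⋃ m : ℤ, Set.Ioo (zm m) (zp m)) \ Set.Ioo (zm n) (zp n)),
          v t / (|t - x| ^ 3 * vn n t)) x ∧
      0 ≤ (2 / Real.pi) *
        ∫ t in ((⋃ m : ℤ, Set.Ioo (zm m) (zp m)) \ Set.Ioo (zm n) (zp n)),
          v t / (|t - x| ^ 3 * vn n t) ∧
      (2 / Real.pi) *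
        ∫ t in ((⋃ m : ℤ, Set.Ioo (zm m) (zp m)) \ Set.Ioo (zm n) (zp n)),
          v t / (|t - x| ^ 3 * vn n t) ≤ 2 * Vn n x / ρ n ^ 2 := by
  
  intro n x hx
  set S := ((⋃ m : ℤ, Set.Ioo (zm m) (zp m)) \ Set.Ioo (zm n) (zp n)) with hSdef
  have hSm : MeasurableSet S :=
    (MeasurableSet.iUnion fun m => measurableSet_Ioo).diff measurableSet_Ioo
  have hρ0 : 0 < ρ n := hρpos n
  have hdist : ∀ y ∈ Set.Ioo (zm n) (zp n), ∀ t ∈ S, ρ n ≤ |t - y| := by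
    intro y hy t ht
    rw [hρ n]
    have hm : dist y t ∈ Set.image2 dist (Set.Ioo (zm n) (zp n)) S :=
      Set.mem_image2_of_mem hy ht
    have hb : BddBelow (Set.image2 dist (Set.Ioo (zm n) (zp n)) S) := by
      refine ⟨0, ?_⟩
      rintro d ⟨a, _, b, _, rfl⟩
      exact dist_nonneg
    calc sInf _ ≤ dist y t := csInf_le hb hm
      _ = |t - y| := by rw [dist_comm, Real.dist_eq]
  have hedge : ∀ c : ℝ, (∀ ε > 0, ∃ yy ∈ Set.Ioo (zm n) (zp n), |c - yy| ≤ ε) →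
      ∀ t ∈ S, ρ n ≤ |t - c| := by
    intro c hc t ht
    refine le_of_forall_pos_le_add fun ε hε => ?_
    obtain ⟨yy, hyy, hyc⟩ := hc ε hε
    have h1 := hdist yy hyy t ht
    have h2 : |t - yy| ≤ |t - c| + |c - yy| := by
      have e : t - yy = (t - c) + (c - yy) := by ring
      rw [e]
      exact abs_add_le _ _
    linarith
  have hedge1 : ∀ t ∈ S, ρ n ≤ |t - zm n| := by
    refine hedge (zm n) fun ε hε => ?_
    have hδ : 0 < min ε ((zp n - zm n) / 2) := lt_min hε (by linarith [hz n])
    refine ⟨zm n + min ε ((zp n - zm n) / 2), ⟨by linarith, ?_⟩, ?_⟩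
    · have := min_le_right ε ((zp n - zm n) / 2); linarith [hz n]
    · have := min_le_left ε ((zp n - zm n) / 2)
      rw [abs_sub_comm, abs_of_pos (by linarith)]
      linarith
  have hedge2 : ∀ t ∈ S, ρ n ≤ |t - zp n| := by
    refine hedge (zp n) fun ε hε => ?_
    have hδ : 0 < min ε ((zp n - zm n) / 2) := lt_min hε (by linarith [hz n])
    refine ⟨zp n - min ε ((zp n - zm n) / 2), ⟨?_, by linarith⟩, ?_⟩
    · have := min_le_right ε ((zp n - zm n) / 2); linarith [hz n]
    · have := min_le_left ε ((zp n - zm n) / 2)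
      rw [abs_of_pos (by linarith)]
      linarith
  have hvnge : ∀ t ∈ S, ρ n ≤ vn n t := by
    intro t ht
    rw [hvn]
    calc ρ n = Real.sqrt (ρ n * ρ n) := (Real.sqrt_mul_self hρ0.le).symm
      _ ≤ Real.sqrt (|t - zm n| * |t - zp n|) :=
        Real.sqrt_le_sqrt (mul_le_mul (hedge1 t ht) (hedge2 t ht) hρ0.le (abs_nonneg _))
  have hvnnn : ∀ t, 0 ≤ vn n t := fun t => by rw [hvn]; exact Real.sqrt_nonneg _
  set w : ℝ → ℝ := fun t => v t / vn n t with hw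
  set F : ℝ → ℝ → ℝ := fun y t => w t * |t - y|⁻¹ with hF
  set F1 : ℝ → ℝ → ℝ := fun y t => w t * ((t - y) / |t - y| ^ 3) with hF1
  set F2 : ℝ → ℝ → ℝ := fun y t => w t * (2 / |t - y| ^ 3) with hF2
  have hwnn : ∀ t, 0 ≤ w t := fun t => div_nonneg (hvnn t) (hvnnn t)
  have hwle : ∀ t ∈ S, w t ≤ v t / ρ n := by
    intro t ht
    simp only [hw]
    gcongr
    · exact hvnn t
    · exact hvnge t ht
  have hvnmeas : Measurable (vn n) := by
    have e : vn n = fun t => Real.sqrt (|t - zm n| * |t - zp n|) := funext fun t => hvn n t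
    rw [e]
    fun_prop
  have hwmeas : Measurable w := hvmeas.div hvnmeas
  have hFmeas : ∀ y, AEStronglyMeasurable (F y) (volume.restrict S) := by
    intro y
    apply Measurable.aestronglyMeasurable
    simp only [hF]
    fun_prop
  have hF1meas : ∀ y, AEStronglyMeasurable (F1 y) (volume.restrict S) := by
    intro y
    apply Measurable.aestronglyMeasurable
    simp only [hF1]
    fun_prop
  have habs : ∀ y ∈ Set.Ioo (zm n) (zp n), ∀ t ∈ S, ρ n ≤ |t - y| ∧ 0 < |t - y| := by
    intro y hy t ht
    have h := hdist y hy t ht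
    exact ⟨h, lt_of_lt_of_le hρ0 h⟩
  have hboundF : ∀ y ∈ Set.Ioo (zm n) (zp n), ∀ t ∈ S, ‖F y t‖ ≤ v t / ρ n ^ 2 := by
    intro y hy t ht
    obtain ⟨ha, ha0⟩ := habs y hy t ht
    simp only [hF]
    rw [Real.norm_eq_abs, abs_of_nonneg (mul_nonneg (hwnn t) (inv_nonneg.2 (abs_nonneg _)))]
    calc w t * |t - y|⁻¹ ≤ (v t / ρ n) * (ρ n)⁻¹ :=
          mul_le_mul (hwle t ht) (inv_anti₀ hρ0 ha) (inv_nonneg.2 (abs_nonneg _))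
            (div_nonneg (hvnn t) hρ0.le)
      _ = v t / ρ n ^ 2 := by ring
  have hboundF1 : ∀ y ∈ Set.Ioo (zm n) (zp n), ∀ t ∈ S, ‖F1 y t‖ ≤ v t / ρ n ^ 3 := by
    intro y hy t ht
    obtain ⟨ha, ha0⟩ := habs y hy t ht
    simp only [hF1]
    rw [Real.norm_eq_abs, abs_mul, abs_of_nonneg (hwnn t), abs_div, abs_pow, abs_abs]
    have e2 : |t - y| / |t - y| ^ 3 = (|t - y| ^ 2)⁻¹ := by
      rw [show |t - y| ^ 3 = |t - y| * |t - y| ^ 2 by ring, div_mul_eq_div_div,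
        div_self (ne_of_gt ha0), one_div]
    rw [e2]
    calc w t * (|t - y| ^ 2)⁻¹ ≤ (v t / ρ n) * (ρ n ^ 2)⁻¹ :=
          mul_le_mul (hwle t ht) (inv_anti₀ (by positivity) (pow_le_pow_left₀ hρ0.le ha 2))
            (inv_nonneg.2 (by positivity)) (div_nonneg (hvnn t) hρ0.le)
      _ = v t / ρ n ^ 3 := by ring
  have hboundF2 : ∀ y ∈ Set.Ioo (zm n) (zp n), ∀ t ∈ S, ‖F2 y t‖ ≤ 2 * (v t / ρ n ^ 4) := by
    intro y hy t ht
    obtain ⟨ha, ha0⟩ := habs y hy t ht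
    simp only [hF2]
    rw [Real.norm_eq_abs,
      abs_of_nonneg (mul_nonneg (hwnn t) (div_nonneg two_pos.le (by positivity)))]
    calc w t * (2 / |t - y| ^ 3) ≤ (v t / ρ n) * (2 / ρ n ^ 3) := by
          refine mul_le_mul (hwle t ht) ?_ (by positivity) (div_nonneg (hvnn t) hρ0.le)
          rw [div_eq_mul_inv, div_eq_mul_inv]
          exact mul_le_mul_of_nonneg_left
            (inv_anti₀ (by positivity) (pow_le_pow_left₀ hρ0.le ha 3)) two_pos.le
      _ = 2 * (v t / ρ n ^ 4) := by ring
  have hFint : ∀ y ∈ Set.Ioo (zm n) (zp n), Integrable (F y) (volume.restrict S) := by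
    intro y hy
    refine Integrable.mono' ((hvint.restrict).div_const (ρ n ^ 2)) (hFmeas y) ?_
    exact (ae_restrict_mem hSm).mono fun t ht => hboundF y hy t ht
  have hball : ∀ y ∈ Set.Ioo (zm n) (zp n),
      Metric.ball y (min (y - zm n) (zp n - y)) ⊆ Set.Ioo (zm n) (zp n) := by
    intro y hy z hz
    rw [Metric.mem_ball, Real.dist_eq] at hz
    have h1 := abs_lt.1 hz
    have h2 := min_le_left (y - zm n) (zp n - y)
    have h3 := min_le_right (y - zm n) (zp n - y)
    exact ⟨by linarith [h1.1], by linarith [h1.2]⟩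
  have key1 : ∀ y ∈ Set.Ioo (zm n) (zp n),
      Integrable (F1 y) (volume.restrict S) ∧
      HasDerivAt (fun z => ∫ t in S, F z t) (∫ t in S, F1 y t) y := by
    intro y hy
    have hε : 0 < min (y - zm n) (zp n - y) := lt_min (by linarith [hy.1]) (by linarith [hy.2])
    refine hasDerivAt_integral_of_dominated_loc_of_deriv_le (Metric.ball_mem_nhds y hε)
      (Eventually.of_forall fun z => hFmeas z) (hFint y hy) (hF1meas y)
      ((ae_restrict_mem hSm).mono fun t ht z hz => hboundF1 z (hball y hy hz) t ht)
      ((hvint.restrict).div_const (ρ n ^ 3))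
      ((ae_restrict_mem hSm).mono fun t ht z hz => ?_)
    have ha : ρ n ≤ |t - z| := hdist z (hball y hy hz) t ht
    have hne : t ≠ z := by
      intro hc
      rw [hc, sub_self, abs_zero] at ha
      linarith
    exact (aux1 t z hne).const_mul (w t)
  have key2 : ∀ y ∈ Set.Ioo (zm n) (zp n),
      Integrable (F2 y) (volume.restrict S) ∧
      HasDerivAt (fun z => ∫ t in S, F1 z t) (∫ t in S, F2 y t) y := by
    intro y hy
    have hε : 0 < min (y - zm n) (zp n - y) := lt_min (by linarith [hy.1]) (by linarith [hy.2])
    refine hasDerivAt_integral_of_dominated_loc_of_deriv_le (Metric.ball_mem_nhds y hε)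
      (Eventually.of_forall fun z => hF1meas z) ((key1 y hy).1)
      (by apply Measurable.aestronglyMeasurable; simp only [hF2]; fun_prop)
      ((ae_restrict_mem hSm).mono fun t ht z hz => hboundF2 z (hball y hy hz) t ht)
      (((hvint.restrict).div_const (ρ n ^ 4)).const_mul 2)
      ((ae_restrict_mem hSm).mono fun t ht z hz => ?_)
    have ha : ρ n ≤ |t - z| := hdist z (hball y hy hz) t ht
    have hne : t ≠ z := by
      intro hc
      rw [hc, sub_self, abs_zero] at ha
      linarith
    exact (aux2 t z hne).const_mul (w t)
  have hVnF : Vn n = fun z => (1 / Real.pi) * ∫ t in S, F z t := by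
    funext z
    rw [hVn n z]
    congr 1
    refine integral_congr_ae (Eventually.of_forall fun t => ?_)
    simp only [hF, hw]
    ring
  have hD1 : ∀ y ∈ Set.Ioo (zm n) (zp n),
      HasDerivAt (Vn n) ((1 / Real.pi) * ∫ t in S, F1 y t) y := by
    intro y hy
    rw [hVnF]
    exact ((key1 y hy).2).const_mul _
  have hdiffx : DifferentiableAt ℝ (Vn n) x := (hD1 x hx).differentiableAt
  have hD2 : HasDerivAt (deriv (Vn n)) ((1 / Real.pi) * ∫ t in S, F2 x t) x := by
    have h := ((key2 x hx).2).const_mul (1 / Real.pi)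
    refine HasDerivAt.congr_of_eventuallyEq h ?_
    filter_upwards [isOpen_Ioo.mem_nhds hx] with y hy
    exact (hD1 y hy).deriv
  have hI2 : ∫ t in S, F2 x t = 2 * ∫ t in S, v t / (|t - x| ^ 3 * vn n t) := by
    rw [← integral_const_mul]
    refine integral_congr_ae (Eventually.of_forall fun t => ?_)
    simp only [hF2, hw]
    ring
  have hIval : (1 / Real.pi) * ∫ t in S, F2 x t
      = (2 / Real.pi) * ∫ t in S, v t / (|t - x| ^ 3 * vn n t) := by
    rw [hI2]; ring
  refine ⟨hdiffx, hIval ▸ hD2, ?_, ?_⟩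
  · refine mul_nonneg (by positivity) (setIntegral_nonneg hSm fun t ht => ?_)
    exact div_nonneg (hvnn t) (mul_nonneg (by positivity) (hvnnn t))
  · rw [hVn n x]
    have hIle : (∫ t in S, v t / (|t - x| ^ 3 * vn n t))
        ≤ ∫ t in S, v t / (|t - x| * vn n t) / ρ n ^ 2 := by
      refine setIntegral_mono_on ?_ ?_ hSm ?_
      · refine Integrable.mono' ((hvint.restrict).div_const (ρ n ^ 4)) ?_ ?_
        · apply Measurable.aestronglyMeasurable; fun_prop
        · refine (ae_restrict_mem hSm).mono fun t ht => ?_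
          obtain ⟨ha, ha0⟩ := habs x hx t ht
          rw [Real.norm_eq_abs,
            abs_of_nonneg (div_nonneg (hvnn t) (mul_nonneg (by positivity) (hvnnn t)))]
          have e : v t / (|t - x| ^ 3 * vn n t) = w t * (|t - x| ^ 3)⁻¹ := by
            simp only [hw]; ring
          rw [e]
          calc w t * (|t - x| ^ 3)⁻¹ ≤ (v t / ρ n) * (ρ n ^ 3)⁻¹ :=
                mul_le_mul (hwle t ht)
                  (inv_anti₀ (by positivity) (pow_le_pow_left₀ hρ0.le ha 3))
                  (inv_nonneg.2 (by positivity)) (div_nonneg (hvnn t) hρ0.le)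
            _ = v t / ρ n ^ 4 := by ring
      · have e : (fun t => v t / (|t - x| * vn n t) / ρ n ^ 2)
            = fun t => F x t * (ρ n ^ 2)⁻¹ := by
          funext t; simp only [hF, hw]; ring
        rw [e]
        exact (hFint x hx).mul_const _
      · intro t ht
        obtain ⟨ha, ha0⟩ := habs x hx t ht
        have e : v t / (|t - x| ^ 3 * vn n t)
            = (v t / (|t - x| * vn n t)) / |t - x| ^ 2 := by ring
        rw [e, div_eq_mul_inv, div_eq_mul_inv]
        exact mul_le_mul_of_nonneg_left
          (inv_anti₀ (by positivity) (pow_le_pow_left₀ hρ0.le ha 2))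
          (div_nonneg (hvnn t) (mul_nonneg (abs_nonneg _) (hvnnn t)))
    calc (2 / Real.pi) * ∫ t in S, v t / (|t - x| ^ 3 * vn n t)
        ≤ (2 / Real.pi) * ∫ t in S, v t / (|t - x| * vn n t) / ρ n ^ 2 := by
          exact mul_le_mul_of_nonneg_left hIle (by positivity)
      _ = 2 * ((1 / Real.pi) * ∫ t in S, v t / (|t - x| * vn n t)) / ρ n ^ 2 := by
          rw [integral_div]; ring
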